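/- The claim of Corollary 2 fails without integrability of the orthogonal distribution: for the Hopf fibration foliation of the round S³ (fibers the Hopf circles), which is minimal with non-integrable orthogonal distribution and all leaves compact, there exists a Killing vector field on S³ that is not foliation preserving. -/

import Mathlib

open scoped InnerProductSpace

noncomputable def myX : EuclideanSpace ℂ (Fin 2) →ₗ[ℝ] EuclideanSpace ℂ (Fin 2) where
  toFun z := WithLp.toLp 2 ![(starRingEnd ℂ) (z 1), -(starRingEnd ℂ) (z 0)]
  map_add' u v := by
    ext i
    fin_cases i <;> simp [PiLp.add_apply] <;> ring
  map_smul' r z := by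
    ext i
    fin_cases i <;> simp [PiLp.smul_apply, Complex.real_smul] <;> ring

/-- **The remark after Corollary 2.** Corollary 2 fails without integrability of the
orthogonal distribution: on the round `S³ ⊂ ℂ²` with the Hopf foliation (leaves the orbits
of `z ↦ e^{iθ}z`, whose tangent field is `T(z) = i•z`), which is minimal with compact
leaves and non-integrable orthogonal (contact) distribution, there is a Killing field —
a skew-adjoint (real-)linear vector field `X` — that is not foliation preserving: at some
`z ∈ S³` the bracket `[X,T](z) = X(i•z) - i•X(z)` is not tangent to the Hopf fiber
through `z`, i.e. not an ℝ-multiple of `i•z`. -/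
theorem stmt16 :
    ∃ X : EuclideanSpace ℂ (Fin 2) →ₗ[ℝ] EuclideanSpace ℂ (Fin 2),
      (∀ u v : EuclideanSpace ℂ (Fin 2),
          (⟪X u, v⟫_ℂ).re + (⟪u, X v⟫_ℂ).re = 0) ∧
      ∃ z : EuclideanSpace ℂ (Fin 2), ‖z‖ = 1 ∧
        X (Complex.I • z) - Complex.I • X z ∉
          Submodule.span ℝ {(Complex.I • z : EuclideanSpace ℂ (Fin 2))} := by
  refine ⟨myX, ?_, (EuclideanSpace.single 0 1 : EuclideanSpace ℂ (Fin 2)), ?_, ?_⟩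
  · intro u v
    simp only [PiLp.inner_apply, Fin.sum_univ_two, myX, LinearMap.coe_mk, AddHom.coe_mk,
      Matrix.cons_val_zero, Matrix.cons_val_one, Matrix.head_cons, RCLike.inner_apply]
    simp [Complex.add_re, Complex.mul_re, Complex.conj_re, Complex.conj_im]
    ring
  · simp
  · rw [Submodule.mem_span_singleton]
    rintro ⟨a, ha⟩
    set z : EuclideanSpace ℂ (Fin 2) := EuclideanSpace.single 0 1 with hz
    have h1 : (a • (Complex.I • z)) 1 = (myX (Complex.I • z) - Complex.I • myX z) 1 := by
      rw [ha]
    simp [myX, hz, EuclideanSpace.single_apply, PiLp.smul_apply, PiLp.sub_apply,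
      Complex.ext_iff] at h1
    norm_num at h1
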